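/- Let u ∈ K solve ⟨Au − ℓ, v − u⟩ ≥ 0 for all v ∈ K, let u* ∈ K̃ solve the (unperturbed) discrete variational inequality ⟨Au* − ℓ, ṽ − u*⟩ ≥ 0 for all ṽ ∈ K̃, and let ũ ∈ K̃ solve the perturbed discrete variational inequality ⟨Ãũ − ℓ̃, ṽ − ũ⟩ ≥ 0 for all ṽ ∈ K̃. Then for all v ∈ K and all ṽ ∈ K̃ there holds ‖u − ũ‖_V² ≤ (4 + 8c²/α²) ‖u − ṽ‖_V² + (8/α) ⟨Au − ℓ, ṽ − u + v − u*⟩ + (8/α̃²) ‖(A − Ã)u* − (ℓ − ℓ̃)‖_{Ṽ*}², where ‖·‖_{Ṽ*} denotes the dual norm on Ṽ*. -/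

import Mathlib

private lemma apriori_aux (α c s t d D m : ℝ) (hα : 0 < α)
    (hs0 : 0 ≤ s) (ht0 : 0 ≤ t) (hd0 : 0 ≤ d) (hm0 : 0 ≤ m)
    (htr : m ≤ s + d) (f1 : α * s ^ 2 ≤ D + c * s * t) :
    α ^ 2 * m ^ 2 ≤ (4 * α ^ 2 + 8 * c ^ 2) * t ^ 2 + 8 * α * D + 8 * α ^ 2 * d ^ 2 := by
  have hms : α ^ 2 * m ^ 2 ≤ α ^ 2 * (s + d) ^ 2 := by
    have := mul_self_le_mul_self hm0 htr
    nlinarith [sq_nonneg α]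
  have h8 : 8 * α * (α * s ^ 2) ≤ 8 * α * (D + c * s * t) :=
    mul_le_mul_of_nonneg_left f1 (by positivity)
  nlinarith [hms, h8, sq_nonneg (2 * c * t - α * s),
    mul_nonneg (sq_nonneg α) (sq_nonneg (s - d))]

set_option maxHeartbeats 400000 in
set_option synthInstance.maxHeartbeats 400000 in
/-- Corollary 3.1: a priori error estimate for perturbations introduced after
discretization.  `u ∈ K` solves the continuous VI, `ustar ∈ K̃` the unperturbed
discrete VI and `ut ∈ K̃` the perturbed discrete VI.  Then for all `v ∈ K`,
`vt ∈ K̃`: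
`‖u − ũ‖² ≤ (4 + 8c²/α²)‖u − ṽ‖² + (8/α)⟨Au − ℓ, ṽ − u + v − u*⟩
  + (8/α̃²)‖(A − Ã)u* − (ℓ − ℓ̃)‖_{W*}²`. -/
theorem apriori_error_perturbation_after_discretization
    {V : Type*} [NormedAddCommGroup V] [InnerProductSpace ℝ V] [CompleteSpace V]
    (W : Submodule ℝ V) [CompleteSpace W]
    (A : V →L[ℝ] V →L[ℝ] ℝ) (At : W →L[ℝ] W →L[ℝ] ℝ)
    (l : V →L[ℝ] ℝ) (lt : W →L[ℝ] ℝ)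
    (c α ct αt : ℝ) (hc : 0 < c) (hα : 0 < α) (hct : 0 < ct) (hαt : 0 < αt)
    (hAcont : ∀ v : V, ‖A v‖ ≤ c * ‖v‖)
    (hAell : ∀ v : V, α * ‖v‖ ^ 2 ≤ A v v)
    (hAtcont : ∀ w : W, ‖At w‖ ≤ ct * ‖w‖)
    (hAtell : ∀ w : W, αt * ‖w‖ ^ 2 ≤ At w w)
    (K : Set V) (hKne : K.Nonempty) (hKconv : Convex ℝ K) (hKcl : IsClosed K)
    (Kt : Set W) (hKtne : Kt.Nonempty) (hKtconv : Convex ℝ Kt) (hKtcl : IsClosed Kt)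
    (u : V) (hu : u ∈ K)
    (huVI : ∀ v ∈ K, 0 ≤ (A u - l) (v - u))
    (ustar : W) (hustar : ustar ∈ Kt)
    (hustarVI : ∀ vt ∈ Kt, 0 ≤ (A (ustar : V) - l) ((vt : V) - (ustar : V)))
    (ut : W) (hut : ut ∈ Kt)
    (hutVI : ∀ vt ∈ Kt, 0 ≤ (At ut - lt) (vt - ut)) :
    ∀ v ∈ K, ∀ vt ∈ Kt,
      ‖u - (ut : V)‖ ^ 2 ≤
        (4 + 8 * c ^ 2 / α ^ 2) * ‖u - (vt : V)‖ ^ 2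
          + (8 / α) * (A u - l) ((vt : V) - u + v - (ustar : V))
          + (8 / αt ^ 2) *
              ‖(A (ustar : V) - l).comp W.subtypeL - (At ustar - lt)‖ ^ 2 := by
  intro v hv vt hvt
  have hα2 : (0:ℝ) < α ^ 2 := by positivity
  have hαt2 : (0:ℝ) < αt ^ 2 := by positivity
  set Evec : W →L[ℝ] ℝ := (A (ustar : V) - l).comp W.subtypeL - (At ustar - lt) with hEvec
  set E : ℝ := ‖Evec‖ with hE
  set D : ℝ := (A u - l) ((vt : V) - u + v - (ustar : V)) with hD
  set s : ℝ := ‖u - (ustar : V)‖ with hs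
  set t : ℝ := ‖u - (vt : V)‖ with ht
  set d : ℝ := ‖ustar - ut‖ with hdd
  have hs0 : 0 ≤ s := norm_nonneg _
  have ht0 : 0 ≤ t := norm_nonneg _
  have hd0 : 0 ≤ d := norm_nonneg _
  have hE0 : 0 ≤ E := hE.symm ▸ norm_nonneg Evec
  clear_value Evec E D s t d
  -- Step 1 : Falk-type estimate for u - ustar
  have hid1 : A (u - (ustar : V)) (u - (ustar : V))
      = (A u - l) (u - v) + (A (ustar : V) - l) ((ustar : V) - (vt : V)) + D
        + (A u - A (ustar : V)) (u - (vt : V)) := by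
    simp only [hD, map_sub, map_add, ContinuousLinearMap.sub_apply]
    ring
  have hb1 : (A u - l) (u - v) ≤ 0 := by
    have h := huVI v hv
    have hx : u - v = -(v - u) := (neg_sub v u).symm
    rw [hx, map_neg]; linarith
  have hb2 : (A (ustar : V) - l) ((ustar : V) - (vt : V)) ≤ 0 := by
    have h := hustarVI vt hvt
    have hx : (ustar : V) - (vt : V) = -((vt : V) - (ustar : V)) := (neg_sub _ _).symm
    rw [hx, map_neg]; linarith
  have hb3 : (A u - A (ustar : V)) (u - (vt : V)) ≤ c * s * t := by
    rw [hs, ht]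
    have h1 : (A u - A (ustar : V)) (u - (vt : V))
        ≤ ‖(A u - A (ustar : V)) (u - (vt : V))‖ := le_abs_self _
    have h2 : ‖(A u - A (ustar : V)) (u - (vt : V))‖
        ≤ ‖A u - A (ustar : V)‖ * ‖u - (vt : V)‖ :=
      ContinuousLinearMap.le_opNorm _ _
    have h3 : ‖A u - A (ustar : V)‖ ≤ c * ‖u - (ustar : V)‖ := by
      rw [← map_sub]; exact hAcont _
    have h4 : ‖A u - A (ustar : V)‖ * ‖u - (vt : V)‖
        ≤ (c * ‖u - (ustar : V)‖) * ‖u - (vt : V)‖ :=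
      mul_le_mul_of_nonneg_right h3 (norm_nonneg _)
    linarith
  have f1 : α * s ^ 2 ≤ D + c * s * t := by
    have h0 := hAell (u - (ustar : V))
    rw [hid1] at h0
    simp only [← hs] at h0
    linarith
  -- Step 2 : perturbation estimate for ustar - ut
  have hid2 : At (ustar - ut) (ustar - ut)
      = Evec (ut - ustar) + (A (ustar : V) - l) ((ustar : V) - (ut : V))
        - (At ut - lt) (ustar - ut) := by
    simp only [hEvec, ContinuousLinearMap.sub_apply, ContinuousLinearMap.comp_apply,
      Submodule.subtypeL_apply, map_sub, AddSubgroupClass.coe_sub]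
    ring
  have hb4 : (A (ustar : V) - l) ((ustar : V) - (ut : V)) ≤ 0 := by
    have h := hustarVI ut hut
    have hx : (ustar : V) - (ut : V) = -((ut : V) - (ustar : V)) := (neg_sub _ _).symm
    rw [hx, map_neg]; linarith
  have hb5 : 0 ≤ (At ut - lt) (ustar - ut) := hutVI ustar hustar
  have hb6 : Evec (ut - ustar) ≤ E * d := by
    rw [hE, hdd]
    have h1 : Evec (ut - ustar) ≤ ‖Evec (ut - ustar)‖ := le_abs_self _
    have h2 : ‖Evec (ut - ustar)‖ ≤ ‖Evec‖ * ‖ut - ustar‖ :=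
      ContinuousLinearMap.le_opNorm _ _
    have h3 : ‖ut - ustar‖ = ‖ustar - ut‖ := norm_sub_rev _ _
    rw [h3] at h2
    linarith
  have f2 : αt * d ^ 2 ≤ E * d := by
    have h0 := hAtell (ustar - ut)
    rw [hid2] at h0
    simp only [← hdd] at h0
    linarith
  have hdE : αt * d ≤ E := by
    rcases eq_or_lt_of_le hd0 with h | h
    · rw [← h]; simpa using hE0
    · have hx : (αt * d) * d ≤ E * d := by linarith [f2]
      exact le_of_mul_le_mul_right hx h
  have key2 : αt ^ 2 * d ^ 2 ≤ E ^ 2 := by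
    have hx := mul_self_le_mul_self (mul_nonneg hαt.le hd0) hdE
    calc αt ^ 2 * d ^ 2 = (αt * d) * (αt * d) := by ring
      _ ≤ E * E := hx
      _ = E ^ 2 := by ring
  -- triangle inequality
  have hcoe : ‖((ustar - ut : W) : V)‖ = d := by rw [hdd, Submodule.coe_norm]
  have htr : ‖u - (ut : V)‖ ≤ s + d := by
    have h1 : u - (ut : V) = (u - (ustar : V)) + ((ustar : V) - (ut : V)) := by abel
    have h2 : ((ustar - ut : W) : V) = (ustar : V) - (ut : V) := by
      simp
    rw [h1]
    calc ‖(u - (ustar : V)) + ((ustar : V) - (ut : V))‖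
        ≤ ‖u - (ustar : V)‖ + ‖(ustar : V) - (ut : V)‖ := norm_add_le _ _
      _ = s + d := by rw [← hs, ← h2, hcoe]
  have hm2 : ‖u - (ut : V)‖ ^ 2 ≤ (s + d) ^ 2 :=
    pow_le_pow_left₀ (norm_nonneg _) htr 2
  have key : α ^ 2 * ‖u - (ut : V)‖ ^ 2
      ≤ (4 * α ^ 2 + 8 * c ^ 2) * t ^ 2 + 8 * α * D + 8 * α ^ 2 * d ^ 2 :=
    apriori_aux α c s t d D _ hα hs0 ht0 hd0 (norm_nonneg _) htr f1
  have h1 : 8 * d ^ 2 ≤ 8 / αt ^ 2 * E ^ 2 := by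
    rw [div_mul_eq_mul_div, le_div_iff₀ hαt2]
    linarith [key2]
  have h2 : ‖u - (ut : V)‖ ^ 2
      ≤ (4 + 8 * c ^ 2 / α ^ 2) * t ^ 2 + (8 / α) * D + 8 * d ^ 2 := by
    rw [show (4 + 8 * c ^ 2 / α ^ 2) * t ^ 2 + (8 / α) * D + 8 * d ^ 2
        = ((4 * α ^ 2 + 8 * c ^ 2) * t ^ 2 + 8 * α * D + 8 * α ^ 2 * d ^ 2) / α ^ 2 by
        field_simp, le_div_iff₀ hα2]
    linarith [key]
  linarith [h1, h2]
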